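/- Let A be the real 6×6 matrix A = (1/2)·M where M has rows (0, −1−2√2, 0, −√2, 0, −1−√2), (1+2√2, 0, √2, 0, 1+√2, 0), (0, √2, 0, 1+√2, 0, −1), (−√2, 0, −1−√2, 0, 1, 0), (0, 1+√2, 0, −1, 0, 2+√2), (−1−√2, 0, 1, 0, −2−√2, 0). Set ω₁ := (−1 + √(4 + 3√2))/2 and ω₂ := (1 + √(4 + 3√2))/2. Then the characteristic polynomial of A equals λ²·(λ² + ω₁²)·(λ² + ω₂²); i.e., the eigenvalues of A are 0 with algebraic multiplicity 2 and the two complex-conjugate pairs ±iω₁ and ±iω₂. -/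

import Mathlib

open Polynomial

/-- The coefficient matrix of the linearized equations of motion about the collinear ground
state `↓↑↑` for the standard couplings `J₁ = −1/2`, `J₂ = (1+√2)/2`, `J₃ = √2/2`. -/
noncomputable def linMatA : Matrix (Fin 6) (Fin 6) ℝ :=
  (1 / 2 : ℝ) •
    !![0, -1 - 2 * Real.sqrt 2, 0, -Real.sqrt 2, 0, -1 - Real.sqrt 2;
       1 + 2 * Real.sqrt 2, 0, Real.sqrt 2, 0, 1 + Real.sqrt 2, 0;
       0, Real.sqrt 2, 0, 1 + Real.sqrt 2, 0, -1;
       -Real.sqrt 2, 0, -1 - Real.sqrt 2, 0, 1, 0;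
       0, 1 + Real.sqrt 2, 0, -1, 0, 2 + Real.sqrt 2;
       -1 - Real.sqrt 2, 0, 1, 0, -2 - Real.sqrt 2, 0]

/-- The even-odd block of the characteristic matrix. -/
noncomputable def linBmat : Matrix (Fin 3) (Fin 3) ℝ :=
  !![(1 + 2*Real.sqrt 2)/2, Real.sqrt 2/2, (1 + Real.sqrt 2)/2;
     -(Real.sqrt 2)/2, -(1 + Real.sqrt 2)/2, 1/2;
     -(1 + Real.sqrt 2)/2, 1/2, -(2 + Real.sqrt 2)/2]

/-- The characteristic matrix evaluated at `r`. -/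
noncomputable def linNmat (r : ℝ) : Matrix (Fin 6) (Fin 6) ℝ :=
  !![r, (1 + 2*Real.sqrt 2)/2, 0, Real.sqrt 2/2, 0, (1 + Real.sqrt 2)/2;
     -(1 + 2*Real.sqrt 2)/2, r, -(Real.sqrt 2)/2, 0, -(1 + Real.sqrt 2)/2, 0;
     0, -(Real.sqrt 2)/2, r, -(1 + Real.sqrt 2)/2, 0, 1/2;
     Real.sqrt 2/2, 0, (1 + Real.sqrt 2)/2, r, -1/2, 0;
     0, -(1 + Real.sqrt 2)/2, 0, 1/2, r, -(2 + Real.sqrt 2)/2;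
     (1 + Real.sqrt 2)/2, 0, -1/2, 0, (2 + Real.sqrt 2)/2, r]

/-- Interleaving equivalence `Fin 3 ⊕ Fin 3 ≃ Fin 6`. -/
def linEquiv6 : Fin 3 ⊕ Fin 3 ≃ Fin 6 where
  toFun := Sum.elim (fun k => ⟨2 * k.1, by omega⟩) (fun k => ⟨2 * k.1 + 1, by omega⟩)
  invFun := fun j => if h : j.1 % 2 = 0 then .inl ⟨j.1 / 2, by omega⟩ else .inr ⟨j.1 / 2, by omega⟩
  left_inv := by decide
  right_inv := by decide

set_option maxHeartbeats 1000000 in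
lemma linNmat_det (r : ℝ) :
    (linNmat r).det
    = r^2 * (r^2 + ((-1 + Real.sqrt (4 + 3 * Real.sqrt 2))/2)^2)
        * (r^2 + ((1 + Real.sqrt (4 + 3 * Real.sqrt 2))/2)^2) := by
  rcases eq_or_ne r 0 with rfl | hr
  · rw [show (0:ℝ)^2 * ((0:ℝ)^2 + ((-1 + Real.sqrt (4 + 3 * Real.sqrt 2))/2)^2)
        * ((0:ℝ)^2 + ((1 + Real.sqrt (4 + 3 * Real.sqrt 2))/2)^2) = 0 by ring]
    rw [← Matrix.exists_mulVec_eq_zero_iff]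
    refine ⟨![-1, 0, 1, 0, 1, 0], ?_, ?_⟩
    · intro h
      have := congrFun h 0
      norm_num at this
    · show Matrix.mulVec _ _ = _
      simp only [linNmat, Matrix.cons_mulVec, Matrix.cons_dotProduct,
        Matrix.dotProduct_of_isEmpty, Matrix.cons_eq_zero_iff, Matrix.zero_empty, and_true]
      norm_num
      refine ⟨by ring, by ring, by ring⟩
  · have hsub : (linNmat r).submatrix linEquiv6 linEquiv6 =
        Matrix.fromBlocks (r • 1) linBmat (-linBmat) (r • 1) := by
      ext i j
      rcases i with i | i <;> rcases j with j | j <;> fin_cases i <;> fin_cases j <;>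
        norm_num [linNmat, linEquiv6, linBmat, Matrix.fromBlocks, Matrix.one_apply,
          Fin.ext_iff] <;> ring
    have hdet : (linNmat r).det = (Matrix.fromBlocks (r • 1) linBmat (-linBmat)
        (r • (1 : Matrix (Fin 3) (Fin 3) ℝ))).det := by
      rw [← hsub, Matrix.det_submatrix_equiv_self]
    rw [hdet]
    haveI : Invertible (r • (1 : Matrix (Fin 3) (Fin 3) ℝ)) := by
      apply Matrix.invertibleOfIsUnitDet
      rw [Matrix.det_smul, Matrix.det_one, mul_one]
      exact (isUnit_iff_ne_zero.2 (pow_ne_zero 3 hr))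
    have hinv : ⅟(r • (1 : Matrix (Fin 3) (Fin 3) ℝ)) = r⁻¹ • 1 := by
      apply invOf_eq_right_inv
      rw [smul_mul_smul_comm, one_mul, mul_inv_cancel₀ hr, one_smul]
    rw [Matrix.det_fromBlocks₂₂, hinv]
    rw [Matrix.det_smul, Matrix.det_one, Matrix.det_fin_three]
    simp [linBmat, Matrix.mul_apply, Fin.sum_univ_three, Matrix.one_apply]
    have hs : Real.sqrt 2 ^ 2 = 2 := Real.sq_sqrt (by norm_num)
    have ht : Real.sqrt (4 + Real.sqrt 2 * 3) ^ 2 = 4 + Real.sqrt 2 * 3 :=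
      Real.sq_sqrt (by positivity)
    ring_nf
    field_simp
    ring_nf
    linear_combination (128 * r^2 + 16 * Real.sqrt 2^2 + 96 * Real.sqrt 2 + 64) * hs
      + (-128 * r^2 + 32 - 16 * (Real.sqrt (4 + Real.sqrt 2 * 3)^2 + 4 + 3*Real.sqrt 2)) * ht

set_option maxRecDepth 4000 in
set_option maxHeartbeats 1000000 in
lemma linNmat_of (r : ℝ) :
    Matrix.of (fun i j => (if i = j then r else 0) - linMatA i j) = linNmat r := by
  ext i j
  fin_cases i <;> fin_cases j <;> norm_num [linMatA, linNmat, Fin.ext_iff] <;> ring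

/-- the characteristic polynomial of the linearization matrix `A` is
`λ²(λ² + ω₁²)(λ² + ω₂²)` with `ω₁ = (−1+√(4+3√2))/2` and `ω₂ = (1+√(4+3√2))/2`;
its eigenvalues are `0` (multiplicity 2) and the pairs `±iω₁`, `±iω₂`. -/
theorem charpoly_linMatA :
    linMatA.charpoly =
      X ^ 2 * (X ^ 2 + C (((-1 + Real.sqrt (4 + 3 * Real.sqrt 2)) / 2) ^ 2))
        * (X ^ 2 + C (((1 + Real.sqrt (4 + 3 * Real.sqrt 2)) / 2) ^ 2)) := by
  apply Polynomial.funext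
  intro r
  have h1 : eval r linMatA.charpoly
      = ((Matrix.charmatrix linMatA).map (eval r)).det := by
    have := RingHom.map_det (evalRingHom r) (Matrix.charmatrix linMatA)
    rw [Polynomial.coe_evalRingHom] at this
    rw [Matrix.charpoly, this]
    rw [RingHom.mapMatrix_apply, Polynomial.coe_evalRingHom]
  have h2 : (Matrix.charmatrix linMatA).map (eval r)
      = Matrix.of (fun i j => (if i = j then r else 0) - linMatA i j) := by
    ext i j
    simp [Matrix.charmatrix_apply, Matrix.diagonal_apply, apply_ite (eval r)]
  rw [h1, h2, linNmat_of r, linNmat_det]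
  simp [eval_mul, eval_add, eval_pow]
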